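/- Let D be the derivation of ℚ[x,y,z,p,q] with D(x)=xzq, D(y)=yzp, D(z)=D(p)=D(q)=xyz. For every n ≥ 0, D^n(z) = z · Σ_{σ ∈ Q_n} (xy)^{lap(σ)} q^{dasc(σ)} p^{dp(σ)} z^{2n − 2·lap(σ) − dasc(σ) − dp(σ)}, an identity in ℚ[x,y,z,p,q]. -/

import Mathlib

open Finset MvPolynomial

/-- Stirling permutations of order `n`, encoded as functions `Fin (2*n) → Fin (n+1)`
in one-line notation (position `i` holds the letter `σ (i) ∈ {1,…,n}`), such that each
letter `1,…,n` occurs exactly twice and all entries between the two occurrences of a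
letter are larger than that letter. -/
def StirlingSet (n : ℕ) : Finset (Fin (2*n) → Fin (n+1)) :=
  Finset.univ.filter (fun σ =>
    (∀ v : Fin (n+1), (v : ℕ) ≠ 0 →
        (Finset.univ.filter (fun i => σ i = v)).card = 2) ∧
    (∀ i j k : Fin (2*n), i < j → j < k → σ i = σ k → σ i < σ j))

/-- The letter at position `i ∈ {1,…,2n}` of a Stirling permutation, with the
convention that positions outside this range (in particular position `0`) hold `0`. -/
def sval {n : ℕ} (σ : Fin (2*n) → Fin (n+1)) (i : ℕ) : ℕ :=
  if h : 1 ≤ i ∧ i ≤ 2*n then (σ ⟨i - 1, by omega⟩ : ℕ) else 0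

/-- The number of ascent-plateaus: indices `2 ≤ i ≤ 2n-1` with `σ_{i-1} < σ_i = σ_{i+1}`. -/
def apQ {n : ℕ} (σ : Fin (2*n) → Fin (n+1)) : ℕ :=
  ((Finset.Icc 2 (2*n - 1)).filter
    (fun i => sval σ (i-1) < sval σ i ∧ sval σ i = sval σ (i+1))).card

/-- The number of left ascent-plateaus: indices `1 ≤ i ≤ 2n-1` with
`σ_{i-1} < σ_i = σ_{i+1}`, where `σ_0 = 0`. -/
def lapQ {n : ℕ} (σ : Fin (2*n) → Fin (n+1)) : ℕ :=
  ((Finset.Icc 1 (2*n - 1)).filter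
    (fun i => sval σ (i-1) < sval σ i ∧ sval σ i = sval σ (i+1))).card

/-- The number of double ascents: indices `1 ≤ i ≤ 2n-1` with
`σ_{i-1} < σ_i < σ_{i+1}`, where `σ_0 = 0`. -/
def dascQ {n : ℕ} (σ : Fin (2*n) → Fin (n+1)) : ℕ :=
  ((Finset.Icc 1 (2*n - 1)).filter
    (fun i => sval σ (i-1) < sval σ i ∧ sval σ i < sval σ (i+1))).card

/-- The number of descent-plateaus: indices `2 ≤ i ≤ 2n-1` with
`σ_{i-1} > σ_i = σ_{i+1}`. -/
def dpQ {n : ℕ} (σ : Fin (2*n) → Fin (n+1)) : ℕ :=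
  ((Finset.Icc 2 (2*n - 1)).filter
    (fun i => sval σ i < sval σ (i-1) ∧ sval σ i = sval σ (i+1))).card

/-- The number of ascents: indices `1 ≤ i ≤ 2n-1` with `σ_i < σ_{i+1}` or `i = 1`. -/
def ascQ {n : ℕ} (σ : Fin (2*n) → Fin (n+1)) : ℕ :=
  ((Finset.Icc 1 (2*n - 1)).filter
    (fun i => sval σ i < sval σ (i+1) ∨ i = 1)).card

/-- The number of plateaus: indices `1 ≤ i ≤ 2n-1` with `σ_i = σ_{i+1}`. -/
def platQ {n : ℕ} (σ : Fin (2*n) → Fin (n+1)) : ℕ :=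
  ((Finset.Icc 1 (2*n - 1)).filter (fun i => sval σ i = sval σ (i+1))).card

/-- The flag ascent-plateau number: `2·ap(σ)+1` if `σ_1 = σ_2`, and `2·ap(σ)` otherwise. -/
def fapQ {n : ℕ} (σ : Fin (2*n) → Fin (n+1)) : ℕ :=
  if 1 ≤ n ∧ sval σ 1 = sval σ 2 then 2 * apQ σ + 1 else 2 * apQ σ

section SPaux

open Finset

variable {n : ℕ}

def Rlap (x y z : ℕ) : Prop := x < y ∧ y = z
def Rdasc (x y z : ℕ) : Prop := x < y ∧ y < z
def Rdp (x y z : ℕ) : Prop := y < x ∧ y = z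

instance (x y z : ℕ) : Decidable (Rlap x y z) := inferInstanceAs (Decidable (_ ∧ _))
instance (x y z : ℕ) : Decidable (Rdasc x y z) := inferInstanceAs (Decidable (_ ∧ _))
instance (x y z : ℕ) : Decidable (Rdp x y z) := inferInstanceAs (Decidable (_ ∧ _))

def cnt (R : ℕ → ℕ → ℕ → Prop) [∀ x y z, Decidable (R x y z)] (f : ℕ → ℕ) (m : ℕ) : ℕ :=
  ((Finset.Icc 1 m).filter (fun i => R (f (i-1)) (f i) (f (i+1)))).card

lemma lapQ_eq_cnt (σ : Fin (2*n) → Fin (n+1)) : lapQ σ = cnt Rlap (sval σ) (2*n-1) := rfl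
lemma dascQ_eq_cnt (σ : Fin (2*n) → Fin (n+1)) : dascQ σ = cnt Rdasc (sval σ) (2*n-1) := rfl

lemma sval_le (σ : Fin (2*n) → Fin (n+1)) (i : ℕ) : sval σ i ≤ n := by
  unfold sval; split
  · exact Nat.lt_succ_iff.mp (Fin.is_lt _)
  · exact Nat.zero_le _

lemma sval_eq_zero (σ : Fin (2*n) → Fin (n+1)) (i : ℕ) (h : i = 0 ∨ 2*n < i) : sval σ i = 0 := by
  unfold sval; rw [dif_neg]; omega

lemma sval_eq (σ : Fin (2*n) → Fin (n+1)) {i : ℕ} (h1 : 1 ≤ i) (h2 : i ≤ 2*n) :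
    sval σ i = (σ ⟨i - 1, by omega⟩ : ℕ) := by
  unfold sval; rw [dif_pos ⟨h1, h2⟩]

lemma sval_coe (σ : Fin (2*n) → Fin (n+1)) (a : Fin (2*n)) :
    sval σ ((a : ℕ) + 1) = (σ a : ℕ) := by
  rw [sval_eq σ (by omega) (by omega)]
  have h : (⟨(a:ℕ)+1-1, by omega⟩ : Fin (2*n)) = a := Fin.ext (by simp)
  rw [h]

/-- bridge: counting positions with a property of the value, Fin-level vs sval-level. -/
lemma card_bridge (σ : Fin (2*n) → Fin (n+1)) (P : ℕ → Prop) [DecidablePred P] :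
    (Finset.univ.filter (fun i => P ((σ i : ℕ)))).card
      = ((Finset.Icc 1 (2*n)).filter (fun i => P (sval σ i))).card := by
  refine Finset.card_nbij (fun i => (i : ℕ) + 1) ?_ ?_ ?_
  · intro a ha
    simp only [mem_coe, mem_filter, mem_univ, true_and, mem_Icc] at ha ⊢
    exact ⟨⟨by omega, by omega⟩, by rwa [sval_coe]⟩
  · intro a _ b _ h
    have : (a:ℕ) = (b:ℕ) := by simpa using h
    exact Fin.ext this
  · intro j hj
    simp only [Set.mem_image, coe_filter, Set.mem_setOf_eq, mem_Icc, mem_coe, mem_univ,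
      true_and] at hj ⊢
    obtain ⟨⟨h1, h2⟩, hP⟩ := hj
    refine ⟨⟨j - 1, by omega⟩, ?_, by simp; omega⟩
    rwa [sval_eq σ h1 h2] at hP

lemma mem_stirling_iff (σ : Fin (2*n) → Fin (n+1)) :
    σ ∈ StirlingSet n ↔
      (∀ v, 1 ≤ v → v ≤ n →
        ((Finset.Icc 1 (2*n)).filter (fun i => sval σ i = v)).card = 2) ∧
      (∀ i j k, 1 ≤ i → i < j → j < k → k ≤ 2*n →
        sval σ i = sval σ k → sval σ i < sval σ j) := by
  rw [StirlingSet, Finset.mem_filter]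
  simp only [Finset.mem_univ, true_and]
  have key : ∀ v : Fin (n+1),
      (Finset.univ.filter (fun i => σ i = v)).card
        = ((Finset.Icc 1 (2*n)).filter (fun i => sval σ i = (v:ℕ))).card := by
    intro v
    rw [← card_bridge σ (fun x => x = (v:ℕ))]
    congr 1
    apply Finset.filter_congr
    intro i _
    simp [Fin.ext_iff]
  constructor
  · rintro ⟨h1, h2⟩
    constructor
    · intro v hv1 hv2
      have := h1 ⟨v, by omega⟩ (by simpa using by omega)
      rwa [key] at this
    · intro i j k hi hij hjk hk he
      have hi2 : i ≤ 2*n := by omega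
      have hj2 : j ≤ 2*n := by omega
      rw [sval_eq σ hi hi2, sval_eq σ (by omega) hj2,
        sval_eq σ (by omega) hk] at *
      have := h2 ⟨i-1, by omega⟩ ⟨j-1, by omega⟩ ⟨k-1, by omega⟩
        (Fin.mk_lt_mk.mpr (by omega)) (Fin.mk_lt_mk.mpr (by omega))
        (Fin.ext (by exact_mod_cast he))
      exact_mod_cast this
  · rintro ⟨h1, h2⟩
    constructor
    · intro v hv
      rw [key]
      exact h1 (v:ℕ) (by omega) (by omega)
    · intro i j k hij hjk he
      have := h2 ((i:ℕ)+1) ((j:ℕ)+1) ((k:ℕ)+1) (by omega)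
        (by have := Fin.lt_def.mp hij; omega) (by have := Fin.lt_def.mp hjk; omega)
        (by omega) (by rw [sval_coe, sval_coe]; exact_mod_cast congrArg _ he)
      rw [sval_coe, sval_coe] at this
      exact_mod_cast this

end SPaux
section SPfacts

open Finset

variable {n : ℕ} {f : ℕ → ℕ}

def StirF (n : ℕ) (f : ℕ → ℕ) : Prop :=
  (∀ i, f i ≤ n) ∧
  (∀ i, i = 0 ∨ 2*n < i → f i = 0) ∧
  (∀ v, 1 ≤ v → v ≤ n → ((Finset.Icc 1 (2*n)).filter (fun i => f i = v)).card = 2) ∧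
  (∀ i j k, 1 ≤ i → i < j → j < k → k ≤ 2*n → f i = f k → f i < f j)

lemma stirF_of_mem {σ : Fin (2*n) → Fin (n+1)} (h : σ ∈ StirlingSet n) :
    StirF n (sval σ) := by
  obtain ⟨h1, h2⟩ := (mem_stirling_iff σ).mp h
  exact ⟨sval_le σ, sval_eq_zero σ, h1, h2⟩

lemma StirF.pos (h : StirF n f) : ∀ i, 1 ≤ i → i ≤ 2*n → 1 ≤ f i := by
  obtain ⟨hle, h0, hcard, _⟩ := h
  have hU : ((Finset.Icc 1 n).biUnion
      (fun v => (Finset.Icc 1 (2*n)).filter (fun i => f i = v))) = Finset.Icc 1 (2*n) := by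
    apply Finset.eq_of_subset_of_card_le
    · intro i hi
      simp only [mem_biUnion, mem_filter, mem_Icc] at hi
      obtain ⟨v, _, hv⟩ := hi
      simp [hv.1]
    · rw [Finset.card_biUnion]
      · rw [Finset.sum_congr rfl (fun v hv => by
          simp only [mem_Icc] at hv; exact hcard v hv.1 hv.2)]
        simp [Nat.card_Icc, mul_comm]
      · intro x hx y hy hxy
        simp only [Finset.disjoint_left, mem_filter]
        rintro a ⟨_, rfl⟩ ⟨_, h⟩
        exact hxy h
  intro i hi1 hi2
  have : i ∈ Finset.Icc 1 (2*n) := by simp; omega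
  rw [← hU] at this
  simp only [mem_biUnion, mem_filter, mem_Icc] at this
  obtain ⟨v, hv, _, hfi⟩ := this
  omega

lemma StirF.other (h : StirF n f) {i : ℕ} (hi1 : 1 ≤ i) (hi2 : i ≤ 2*n) :
    ∃ j, 1 ≤ j ∧ j ≤ 2*n ∧ j ≠ i ∧ f j = f i := by
  obtain ⟨hle, h0, hcard, _⟩ := h
  have hpos := StirF.pos ⟨hle, h0, hcard, by tauto⟩ i hi1 hi2
  have hc := hcard (f i) hpos (hle i)
  obtain ⟨x, y, hxy, hs⟩ := Finset.card_eq_two.mp hc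
  have hiin : i ∈ (Finset.Icc 1 (2*n)).filter (fun j => f j = f i) := by
    simp; omega
  rw [hs] at hiin
  simp only [Finset.mem_insert, Finset.mem_singleton] at hiin
  have hx : x ∈ (Finset.Icc 1 (2*n)).filter (fun j => f j = f i) := by simp [hs]
  have hy : y ∈ (Finset.Icc 1 (2*n)).filter (fun j => f j = f i) := by simp [hs]
  simp only [mem_filter, mem_Icc] at hx hy
  rcases hiin with rfl | rfl
  · exact ⟨y, hy.1.1, hy.1.2, fun h => hxy h.symm, hy.2⟩
  · exact ⟨x, hx.1.1, hx.1.2, hxy, hx.2⟩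

/-- key structural lemma: an ascent is followed by a weak ascent. -/
lemma StirF.L1 (h : StirF n f) {i : ℕ} (hi1 : 1 ≤ i) (hi2 : i ≤ 2*n)
    (ha : f (i-1) < f i) : f i ≤ f (i+1) := by
  by_contra hc
  push_neg at hc
  obtain ⟨j, hj1, hj2, hji, hjf⟩ := h.other hi1 hi2
  have hbtw := h.2.2.2
  rcases Nat.lt_or_ge j i with hlt | hge
  · have hne : j ≠ i - 1 := fun he => by rw [he] at hjf; omega
    have := hbtw j (i-1) i hj1 (by omega) (by omega) hi2 (by omega)
    omega
  · have hne : j ≠ i + 1 := fun he => by rw [he] at hjf; omega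
    have := hbtw i (i+1) j hi1 (by omega) (by omega) hj2 (by omega)
    omega

/-- no letter occurs three times in a row. -/
lemma StirF.noTriple (h : StirF n f) {i : ℕ} (hi1 : 1 ≤ i) (hpos : 1 ≤ f i)
    (h12 : f i = f (i+1)) : f (i+1) ≠ f (i+2) := by
  intro h23
  have hle2 : i + 2 ≤ 2*n := by
    by_contra hgt
    have := h.2.1 (i+2) (by omega)
    rcases Nat.lt_or_ge (2*n) (i+1) with h' | h'
    · have := h.2.1 (i+1) (by omega); omega
    · omega
  have hsub : ({i, i+1, i+2} : Finset ℕ) ⊆ (Finset.Icc 1 (2*n)).filter (fun j => f j = f i) := by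
    intro x hx
    simp only [Finset.mem_insert, Finset.mem_singleton] at hx
    simp only [mem_filter, mem_Icc]
    rcases hx with rfl | rfl | rfl <;> omega
  have hcard3 : ({i, i+1, i+2} : Finset ℕ).card = 3 := by
    rw [Finset.card_insert_of_notMem (by simp), Finset.card_insert_of_notMem (by simp),
      Finset.card_singleton]
  have := Finset.card_le_card hsub
  rw [h.2.2.1 (f i) hpos (h.1 i), hcard3] at this
  omega

end SPfacts
section SPins

open Finset

variable {n : ℕ}

def insF (n : ℕ) (σ : Fin (2*n) → Fin (n+1)) (g : ℕ) : Fin (2*(n+1)) → Fin (n+2) :=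
  fun j => if h : (j:ℕ) < g ∧ (j:ℕ) < 2*n then (σ ⟨j, h.2⟩).castSucc
    else if h2 : (j:ℕ) < g + 2 then Fin.last (n+1)
    else (σ ⟨(j:ℕ) - 2, by have := j.isLt; omega⟩).castSucc

variable {σ : Fin (2*n) → Fin (n+1)} {g : ℕ}

lemma sval_insF (hg : g ≤ 2*n) (j : ℕ) :
    sval (insF n σ g) j =
      if j ≤ g then sval σ j else if j ≤ g + 2 then n + 1 else sval σ (j - 2) := by
  by_cases hj0 : 1 ≤ j ∧ j ≤ 2*(n+1)
  · rw [sval_eq (insF n σ g) hj0.1 hj0.2]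
    simp only [insF]
    by_cases h1 : j ≤ g
    · rw [dif_pos (show j - 1 < g ∧ j - 1 < 2*n by omega), if_pos h1, Fin.coe_castSucc,
        sval_eq σ hj0.1 (by omega)]
    · by_cases h2 : j ≤ g + 2
      · rw [dif_neg (show ¬ (j - 1 < g ∧ j - 1 < 2*n) by omega), dif_pos (show j - 1 < g + 2 by omega),
          if_neg h1, if_pos h2, Fin.val_last]
      · rw [dif_neg (show ¬ (j - 1 < g ∧ j - 1 < 2*n) by omega),
          dif_neg (show ¬ (j - 1 < g + 2) by omega), if_neg h1, if_neg h2, Fin.coe_castSucc,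
          sval_eq σ (show 1 ≤ j - 2 by omega) (show j - 2 ≤ 2*n by omega)]
        congr 1
  · rw [sval_eq_zero (insF n σ g) j (by omega)]
    rcases (by omega : j = 0 ∨ 2*(n+1) < j) with rfl | hbig
    · rw [if_pos (Nat.zero_le g), sval_eq_zero σ 0 (Or.inl rfl)]
    · rw [if_neg (by omega), if_neg (by omega), sval_eq_zero σ (j-2) (by omega)]

end SPins
section SPins2

open Finset

variable {n : ℕ} {σ : Fin (2*n) → Fin (n+1)} {g : ℕ}

lemma insF_low (hg : g ≤ 2*n) {j : ℕ} (hj : j ≤ g) :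
    sval (insF n σ g) j = sval σ j := by rw [sval_insF hg, if_pos hj]

lemma insF_mid (hg : g ≤ 2*n) {j : ℕ} (hj1 : g < j) (hj2 : j ≤ g + 2) :
    sval (insF n σ g) j = n + 1 := by
  rw [sval_insF hg, if_neg (by omega), if_pos hj2]

lemma insF_high (hg : g ≤ 2*n) {j : ℕ} (hj : g + 2 < j) :
    sval (insF n σ g) j = sval σ (j - 2) := by
  rw [sval_insF hg, if_neg (by omega), if_neg (by omega)]

lemma insF_max_iff (hg : g ≤ 2*n) (j : ℕ) :
    sval (insF n σ g) j = n + 1 ↔ j = g + 1 ∨ j = g + 2 := by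
  rw [sval_insF hg]
  have h1 := sval_le σ j
  have h2 := sval_le σ (j - 2)
  split
  · omega
  · split <;> omega

lemma stirF_insF (hσ : StirF n (sval σ)) (hg : g ≤ 2*n) :
    StirF (n+1) (sval (insF n σ g)) := by
  refine ⟨sval_le _, sval_eq_zero _, ?_, ?_⟩
  · intro v hv1 hv2
    rcases (by omega : v = n + 1 ∨ v ≤ n) with rfl | hvn
    · have : (Finset.Icc 1 (2*(n+1))).filter (fun i => sval (insF n σ g) i = n + 1) = {g+1, g+2} := by
        ext i
        simp only [mem_filter, mem_Icc, Finset.mem_insert, Finset.mem_singleton]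
        rw [insF_max_iff hg]
        omega
      rw [this]
      rw [Finset.card_insert_of_notMem (by simp), Finset.card_singleton]
    · have hcards : ((Finset.Icc 1 (2*(n+1))).filter (fun i => sval (insF n σ g) i = v)).card
          = ((Finset.Icc 1 (2*n)).filter (fun i => sval σ i = v)).card := by
        apply Finset.card_nbij' (fun b => if b ≤ g then b else b - 2)
          (fun a => if a ≤ g then a else a + 2)
        · intro b hb
          simp only [mem_coe, mem_filter, mem_Icc] at hb ⊢
          obtain ⟨⟨hb1, hb2⟩, hbv⟩ := hb
          have hnm : ¬ (b = g + 1 ∨ b = g + 2) := by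
            intro h
            rw [(insF_max_iff hg b).mpr h] at hbv
            omega
          by_cases hbg : b ≤ g
          · rw [if_pos hbg]
            rw [insF_low hg hbg] at hbv
            exact ⟨⟨by omega, by omega⟩, hbv⟩
          · rw [if_neg hbg]
            rw [insF_high hg (by omega)] at hbv
            exact ⟨⟨by omega, by omega⟩, hbv⟩
        · intro a ha
          simp only [mem_coe, mem_filter, mem_Icc] at ha ⊢
          obtain ⟨⟨ha1, ha2⟩, hav⟩ := ha
          by_cases hag : a ≤ g
          · rw [if_pos hag, insF_low hg hag]
            exact ⟨⟨by omega, by omega⟩, hav⟩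
          · rw [if_neg hag, insF_high hg (by omega)]
            refine ⟨⟨by omega, by omega⟩, ?_⟩
            rw [show a + 2 - 2 = a by omega]; exact hav
        · intro b hb
          simp only [mem_coe, mem_filter, mem_Icc] at hb
          obtain ⟨⟨hb1, hb2⟩, hbv⟩ := hb
          have hnm : ¬ (b = g + 1 ∨ b = g + 2) := by
            intro h
            rw [(insF_max_iff hg b).mpr h] at hbv
            omega
          dsimp only; split <;> (try split) <;> omega
        · intro a ha
          simp only [mem_coe, mem_filter, mem_Icc] at ha
          dsimp only; split <;> (try split) <;> omega
      rw [hcards]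
      exact hσ.2.2.1 v hv1 hvn
  · intro i j k hi hij hjk hk he
    by_cases hmax : sval (insF n σ g) i = n + 1
    · have hi' := (insF_max_iff hg i).mp hmax
      have hk' := (insF_max_iff hg k).mp (by rw [← he]; exact hmax)
      omega
    · have hFi : sval (insF n σ g) i ≤ n := by have := sval_le (insF n σ g) i; omega
      have hii : i ≤ g ∨ g + 2 < i := by
        have := (insF_max_iff hg i).not.mp hmax; omega
      have hkk : k ≤ g ∨ g + 2 < k := by
        have h := (insF_max_iff (σ := σ) hg k).not.mp (by rw [← he]; exact hmax)
        omega
      by_cases hjm : sval (insF n σ g) j = n + 1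
      · omega
      · have hjj : j ≤ g ∨ g + 2 < j := by
          have := (insF_max_iff hg j).not.mp hjm; omega
        have key : ∀ x, 1 ≤ x → (x ≤ g ∨ g + 2 < x) → x ≤ 2*(n+1) →
            sval (insF n σ g) x = sval σ (if x ≤ g then x else x - 2) := by
          intro x hx1 hx2 hx3
          rcases hx2 with h | h
          · rw [if_pos h]; exact insF_low hg h
          · rw [if_neg (by omega)]; exact insF_high hg h
        have ei := key i hi hii (by omega)
        have ej := key j (by omega) hjj (by omega)
        have ek := key k (by omega) hkk hk
        rw [ei, ek] at he
        rw [ei, ej]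
        refine hσ.2.2.2 (if i ≤ g then i else i - 2) (if j ≤ g then j else j - 2)
          (if k ≤ g then k else k - 2) ?_ ?_ ?_ ?_ he
        · split <;> omega
        · split <;> split <;> omega
        · split <;> split <;> omega
        · split <;> omega

lemma insF_mem (hσ : σ ∈ StirlingSet n) (hg : g ≤ 2*n) :
    insF n σ g ∈ StirlingSet (n+1) := by
  have h := stirF_insF (stirF_of_mem hσ) hg
  exact (mem_stirling_iff _).mpr ⟨h.2.2.1, h.2.2.2⟩

end SPins2
section SPbij

open Finset

variable {n : ℕ}

lemma sval_ext {σ σ' : Fin (2*n) → Fin (n+1)} (h : ∀ j, sval σ j = sval σ' j) : σ = σ' := by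
  funext i
  apply Fin.ext
  have := h ((i:ℕ)+1)
  rwa [sval_coe, sval_coe] at this

lemma insF_inj {σ σ' : Fin (2*n) → Fin (n+1)} {g g' : ℕ} (hg : g ≤ 2*n) (hg' : g' ≤ 2*n)
    (h : insF n σ g = insF n σ' g') : σ = σ' ∧ g = g' := by
  have hs : ∀ j, sval (insF n σ g) j = sval (insF n σ' g') j := fun j => by rw [h]
  have hgg : g = g' := by
    have h1 : sval (insF n σ' g') (g+1) = n + 1 := by
      rw [← hs]; exact insF_mid hg (by omega) (by omega)
    have h2 : sval (insF n σ g) (g'+1) = n + 1 := by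
      rw [hs]; exact insF_mid hg' (by omega) (by omega)
    have := (insF_max_iff hg' (g+1)).mp h1
    have := (insF_max_iff hg (g'+1)).mp h2
    omega
  subst hgg
  refine ⟨sval_ext (fun j => ?_), rfl⟩
  by_cases hj : j ≤ g
  · have := hs j
    rwa [insF_low hg hj, insF_low hg hj] at this
  · by_cases hj2 : j ≤ 2*n
    · have := hs (j + 2)
      rw [insF_high hg (by omega), insF_high hg (by omega)] at this
      simpa using this
    · rw [sval_eq_zero σ j (by omega), sval_eq_zero σ' j (by omega)]

lemma insF_surj {τ : Fin (2*(n+1)) → Fin (n+2)} (hτ : τ ∈ StirlingSet (n+1)) :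
    ∃ (σ : Fin (2*n) → Fin (n+1)) (g : ℕ), σ ∈ StirlingSet n ∧ g ≤ 2*n ∧ insF n σ g = τ := by
  have hF := stirF_of_mem hτ
  set F := sval τ with hFdef
  -- locate the two occurrences of the maximum
  have hc := hF.2.2.1 (n+1) (by omega) (le_refl _)
  obtain ⟨x, y, hxy, hset⟩ := Finset.card_eq_two.mp hc
  have hpair : ∃ p q, p < q ∧
      (Finset.Icc 1 (2*(n+1))).filter (fun i => F i = n+1) = {p, q} := by
    rcases Nat.lt_or_ge x y with h | h
    · exact ⟨x, y, h, hset⟩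
    · exact ⟨y, x, by omega, by rw [hset, Finset.pair_comm]⟩
  obtain ⟨p, q, hpq, hset⟩ := hpair
  have hmemp : p ∈ (Finset.Icc 1 (2*(n+1))).filter (fun i => F i = n+1) := by
    rw [hset]; simp
  have hmemq : q ∈ (Finset.Icc 1 (2*(n+1))).filter (fun i => F i = n+1) := by
    rw [hset]; simp
  simp only [mem_filter, mem_Icc] at hmemp hmemq
  have hmax_iff : ∀ i, 1 ≤ i → i ≤ 2*(n+1) → (F i = n+1 ↔ (i = p ∨ i = q)) := by
    intro i h1 h2
    constructor
    · intro hFi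
      have : i ∈ ({p, q} : Finset ℕ) := by
        rw [← hset]; simp only [mem_filter, mem_Icc]; exact ⟨⟨h1, h2⟩, hFi⟩
      simpa using this
    · rintro (rfl | rfl)
      · exact hmemp.2
      · exact hmemq.2
  -- the two occurrences are adjacent
  have hq : q = p + 1 := by
    by_contra hne
    have := hF.2.2.2 p (p+1) q hmemp.1.1 (by omega) (by omega) hmemq.1.2
      (by rw [hmemp.2, hmemq.2])
    have := hF.1 (p+1)
    omega
  subst hq
  set g := p - 1 with hgdef
  have hg : g ≤ 2*n := by omega
  have hsmall : ∀ i, 1 ≤ i → i ≤ 2*(n+1) → i ≠ p → i ≠ p + 1 → F i ≤ n := by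
    intro i h1 h2 h3 h4
    have := hF.1 i
    have := (hmax_iff i h1 h2).not.mpr (by omega)
    omega
  have hex : ∃ σ : Fin (2*n) → Fin (n+1),
      ∀ i : Fin (2*n), (σ i : ℕ) = if (i:ℕ)+1 ≤ g then F ((i:ℕ)+1) else F ((i:ℕ)+3) := by
    refine ⟨fun i => ⟨if (i:ℕ)+1 ≤ g then F ((i:ℕ)+1) else F ((i:ℕ)+3), ?_⟩, fun i => rfl⟩
    have hlt := i.isLt
    split <;> rename_i hcase
    · have := hsmall ((i:ℕ)+1) (by omega) (by omega) (by omega) (by omega)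
      omega
    · have := hsmall ((i:ℕ)+3) (by omega) (by omega) (by omega) (by omega)
      omega
  obtain ⟨σ, hσ⟩ := hex
  have hsv : ∀ j, 1 ≤ j → j ≤ 2*n → sval σ j = if j ≤ g then F j else F (j+2) := by
    intro j h1 h2
    rw [sval_eq σ h1 h2, hσ ⟨j-1, by omega⟩]
    have e1 : ((⟨j-1, by omega⟩ : Fin (2*n)) : ℕ) = j - 1 := rfl
    rw [e1, show j-1+1 = j by omega, show j-1+3 = j+2 by omega]
  have hformula : ∀ a, sval σ a = F (if a ≤ g then a else a + 2) ∨ (a = 0 ∨ 2*n < a) := by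
    intro a
    by_cases h1 : 1 ≤ a ∧ a ≤ 2*n
    · left
      rw [hsv a h1.1 h1.2]; split <;> rfl
    · right; omega
  refine ⟨σ, g, ?_, hg, ?_⟩
  · rw [mem_stirling_iff]
    constructor
    · intro v hv1 hv2
      have hcards : ((Finset.Icc 1 (2*n)).filter (fun i => sval σ i = v)).card
          = ((Finset.Icc 1 (2*(n+1))).filter (fun i => F i = v)).card := by
        apply Finset.card_nbij' (fun a => if a ≤ g then a else a + 2)
          (fun b => if b ≤ g then b else b - 2)
        · intro a ha
          simp only [mem_coe, mem_filter, mem_Icc] at ha ⊢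
          obtain ⟨⟨ha1, ha2⟩, hav⟩ := ha
          rw [hsv a ha1 ha2] at hav
          by_cases hag : a ≤ g
          · rw [if_pos hag]; rw [if_pos hag] at hav
            exact ⟨⟨by omega, by omega⟩, hav⟩
          · rw [if_neg hag]; rw [if_neg hag] at hav
            exact ⟨⟨by omega, by omega⟩, hav⟩
        · intro b hb
          simp only [mem_coe, mem_filter, mem_Icc] at hb ⊢
          obtain ⟨⟨hb1, hb2⟩, hbv⟩ := hb
          have hnm : b ≠ p ∧ b ≠ p + 1 := by
            constructor
            · rintro rfl; rw [hmemp.2] at hbv; omega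
            · rintro rfl; rw [hmemq.2] at hbv; omega
          by_cases hbg : b ≤ g
          · rw [if_pos hbg, hsv b hb1 (by omega), if_pos hbg]
            exact ⟨⟨by omega, by omega⟩, hbv⟩
          · rw [if_neg hbg, hsv (b-2) (by omega) (by omega), if_neg (by omega),
              show b - 2 + 2 = b by omega]
            exact ⟨⟨by omega, by omega⟩, hbv⟩
        · intro a ha
          simp only [mem_coe, mem_filter, mem_Icc] at ha
          dsimp only; split <;> (try split) <;> omega
        · intro b hb
          simp only [mem_coe, mem_filter, mem_Icc] at hb
          obtain ⟨⟨hb1, hb2⟩, hbv⟩ := hb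
          have hnm : b ≠ p ∧ b ≠ p + 1 := by
            constructor <;> (rintro rfl)
            · rw [hmemp.2] at hbv; omega
            · rw [hmemq.2] at hbv; omega
          dsimp only; split <;> (try split) <;> omega
      rw [hcards]
      exact hF.2.2.1 v hv1 (by omega)
    · intro i j k hi hij hjk hk he
      have key : ∀ x, 1 ≤ x → x ≤ 2*n →
          sval σ x = F (if x ≤ g then x else x + 2) := by
        intro x h1 h2; rw [hsv x h1 h2]; split <;> rfl
      have hmono : ∀ x y : ℕ, x < y →
          (if x ≤ g then x else x + 2) < (if y ≤ g then y else y + 2) := by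
        intro x y hxy; split <;> split <;> omega
      rw [key i hi (by omega), key k (by omega) hk] at he
      rw [key i hi (by omega), key j (by omega) (by omega)]
      exact hF.2.2.2 _ _ _ (by split <;> omega) (hmono _ _ hij) (hmono _ _ hjk)
        (by split <;> omega) he
  · apply sval_ext (n := n+1)
    intro j
    rw [sval_insF hg j]
    by_cases hj0 : j = 0
    · subst hj0
      rw [if_pos (Nat.zero_le g), sval_eq_zero σ 0 (Or.inl rfl)]
      exact (hF.2.1 0 (Or.inl rfl)).symm
    · by_cases h1 : j ≤ g
      · rw [if_pos h1, hsv j (by omega) (by omega), if_pos h1]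
      · by_cases h2 : j ≤ g + 2
        · rw [if_neg h1, if_pos h2]
          exact ((hmax_iff j (by omega) (by omega)).mpr (by omega)).symm
        · rw [if_neg h1, if_neg h2]
          by_cases h3 : j - 2 ≤ 2*n
          · rw [hsv (j-2) (by omega) h3, if_neg (by omega), show j - 2 + 2 = j by omega]
          · rw [sval_eq_zero σ (j-2) (by omega)]
            exact (hF.2.1 j (by omega)).symm
section SPcnt

open Finset

lemma Icc_one_eq_Ioc (m : ℕ) : Finset.Icc 1 m = Finset.Ioc 0 m :=
  Finset.ext (fun x => by simp only [Finset.mem_Icc, Finset.mem_Ioc]; omega)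

lemma cnt_shift (R : ℕ → ℕ → ℕ → Prop) [∀ x y z : ℕ, Decidable (R x y z)]
    (f f' : ℕ → ℕ) (M n g : ℕ)
    (hn : 1 ≤ n) (hg : g ≤ 2*n)
    (hlow : ∀ j, j ≤ g → f' j = f j)
    (hmid1 : f' (g+1) = M) (hmid2 : f' (g+2) = M)
    (hhigh : ∀ j, g+3 ≤ j → f' j = f (j-2))
    (hf0 : f 0 = 0)
    (h00 : ∀ x, ¬ R 0 0 x)
    (hBD : R (f (2*n)) (f (2*n+1)) (f (2*n+2)) ↔ R M (f (2*n+1)) (f (2*n+2))) :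
    cnt R f' (2*n+2) + (if R (f (g-1)) (f g) (f (g+1)) then 1 else 0)
        + (if R (f g) (f (g+1)) (f (g+2)) then 1 else 0)
      = cnt R f (2*n) + (if R (f (g-1)) (f g) M then 1 else 0)
        + (if R (f g) M M then 1 else 0) + (if R M M (f (g+1)) then 1 else 0)
        + (if R M (f (g+1)) (f (g+2)) then 1 else 0) := by
  classical
  set χ := fun i : ℕ => (if R (f (i-1)) (f i) (f (i+1)) then (1:ℕ) else 0) with hχ
  set χ' := fun i : ℕ => (if R (f' (i-1)) (f' i) (f' (i+1)) then (1:ℕ) else 0) with hχ'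
  have hc1 : cnt R f' (2*n+2) = ∑ i ∈ Finset.Ioc 0 (2*n+2), χ' i := by
    rw [cnt, Finset.card_filter, Icc_one_eq_Ioc]
  have hc2 : cnt R f (2*n) = ∑ i ∈ Finset.Ioc 0 (2*n), χ i := by
    rw [cnt, Finset.card_filter, Icc_one_eq_Ioc]
  have hagreeLow : ∀ x, x + 1 ≤ g → χ' x = χ x := by
    intro x hx
    simp only [hχ, hχ']
    rw [hlow (x-1) (by omega), hlow x (by omega), hlow (x+1) (by omega)]
  have hagree : ∀ x, g + 2 ≤ x → χ' (x+2) = χ x := by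
    intro x hx
    simp only [hχ, hχ']
    rw [show x+2-1 = x+1 by omega, hhigh (x+1) (by omega), hhigh (x+2) (by omega),
      hhigh (x+3) (by omega), show x+1-2 = x-1 by omega, show x+2-2 = x by omega,
      show x+3-2 = x+1 by omega]
  have hmapsum : ∀ (a b : ℕ) (h : ℕ → ℕ),
      ∑ i ∈ Finset.Ioc (a+2) (b+2), h i = ∑ i ∈ Finset.Ioc a b, h (i+2) := by
    intro a b h
    rw [← Finset.map_add_right_Ioc a b 2, Finset.sum_map]
    rfl
  rcases (by omega : g = 0 ∨ g = 2*n ∨ (1 ≤ g ∧ g + 1 ≤ 2*n)) with rfl | rfl | ⟨hg1, hg2⟩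
  · -- g = 0
    have e1 : ∑ i ∈ Finset.Ioc 0 (2*n+2), χ' i
        = χ' 1 + χ' 2 + χ' 3 + ∑ i ∈ Finset.Ioc 1 (2*n), χ i := by
      rw [← Finset.sum_Ioc_consecutive χ' (show 0 ≤ 3 by omega) (show 3 ≤ 2*n+2 by omega),
        show (3:ℕ) = 2+1 from rfl, Finset.sum_Ioc_succ_top (by omega),
        show (2:ℕ) = 1+1 from rfl, Finset.sum_Ioc_succ_top (by omega),
        show (1:ℕ) = 0+1 from rfl, Finset.sum_Ioc_succ_top (by omega),
        Finset.Ioc_self, Finset.sum_empty,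
        show 2*n+2 = 2*n-1+1+2 by omega, show (0:ℕ)+1+1+1 = 0+1+2 by omega,
        hmapsum (0+1) (2*n-1+1) χ']
      rw [Finset.sum_congr rfl (fun x hx => hagree x (by
        simp only [Finset.mem_Ioc] at hx; omega))]
      rw [show 2*n-1+1 = 2*n by omega]
      ring
    have e2 : ∑ i ∈ Finset.Ioc 0 (2*n), χ i = χ 1 + ∑ i ∈ Finset.Ioc 1 (2*n), χ i := by
      rw [← Finset.sum_Ioc_consecutive χ (show 0 ≤ 1 by omega) (show 1 ≤ 2*n by omega),
        show (1:ℕ) = 0+1 from rfl, Finset.sum_Ioc_succ_top (by omega),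
        Finset.Ioc_self, Finset.sum_empty]
      ring
    have hA0 : (if R (f (0-1)) (f 0) (f (0+1)) then (1:ℕ) else 0) = 0 := by
      rw [show (0:ℕ)-1 = 0 from rfl, hf0, if_neg (h00 _)]
    have hA : (if R (f (0-1)) (f 0) M then (1:ℕ) else 0) = 0 := by
      rw [show (0:ℕ)-1 = 0 from rfl, hf0, if_neg (h00 _)]
    have hB : χ' 1 = (if R (f 0) M M then (1:ℕ) else 0) := by
      simp only [hχ']
      rw [show (1:ℕ)-1 = 0 from rfl, hlow 0 (by omega), show (1:ℕ)+1 = 0+2 from rfl,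
        show (1:ℕ) = 0+1 from rfl, hmid1, hmid2]
    have hC : χ' 2 = (if R M M (f (0+1)) then (1:ℕ) else 0) := by
      simp only [hχ']
      rw [show (2:ℕ)-1 = 0+1 from rfl, show (2:ℕ) = 0+2 from rfl, hmid1, hmid2,
        show (0:ℕ)+2+1 = 3 from rfl, hhigh 3 (by omega), show (3:ℕ)-2 = 0+1 from rfl]
    have hD : χ' 3 = (if R M (f (0+1)) (f (0+2)) then (1:ℕ) else 0) := by
      simp only [hχ']
      rw [show (3:ℕ)-1 = 0+2 from rfl, hmid2, hhigh 3 (by omega),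
        show (3:ℕ)+1 = 4 from rfl, hhigh 4 (by omega), show (3:ℕ)-2 = 0+1 from rfl,
        show (4:ℕ)-2 = 0+2 from rfl]
    have hB0 : (if R (f 0) (f (0+1)) (f (0+2)) then (1:ℕ) else 0) = χ 1 := rfl
    rw [hc1, hc2, e1, e2, hA0, hA, hB0.symm, ← hB, ← hC, ← hD]
    ring
  · -- g = 2*n
    have e1 : ∑ i ∈ Finset.Ioc 0 (2*n+2), χ' i
        = ∑ i ∈ Finset.Ioc 0 (2*n-1), χ i + χ' (2*n) + χ' (2*n+1) + χ' (2*n+2) := by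
      rw [show 2*n+2 = 2*n+1+1 by omega, Finset.sum_Ioc_succ_top (by omega),
        show 2*n+1 = 2*n+1 from rfl, Finset.sum_Ioc_succ_top (by omega),
        show 2*n = (2*n-1)+1 by omega, Finset.sum_Ioc_succ_top (by omega),
        Finset.sum_congr rfl (fun x hx => hagreeLow x (by
          simp only [Finset.mem_Ioc] at hx; omega))]
      rw [show 2*n-1+1 = 2*n by omega]
    have e2 : ∑ i ∈ Finset.Ioc 0 (2*n), χ i = ∑ i ∈ Finset.Ioc 0 (2*n-1), χ i + χ (2*n) := by
      rw [show 2*n = (2*n-1)+1 by omega, Finset.sum_Ioc_succ_top (by omega),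
        show 2*n-1+1 = 2*n by omega]
    have hA : χ' (2*n) = (if R (f (2*n-1)) (f (2*n)) M then (1:ℕ) else 0) := by
      simp only [hχ']
      rw [hlow (2*n-1) (by omega), hlow (2*n) (by omega), show 2*n+1 = 2*n+1 from rfl, hmid1]
    have hB : χ' (2*n+1) = (if R (f (2*n)) M M then (1:ℕ) else 0) := by
      simp only [hχ']
      rw [show 2*n+1-1 = 2*n by omega, hlow (2*n) (by omega), hmid1,
        show 2*n+1+1 = 2*n+2 by omega, hmid2]
    have hC : χ' (2*n+2) = (if R M M (f (2*n+1)) then (1:ℕ) else 0) := by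
      simp only [hχ']
      rw [show 2*n+2-1 = 2*n+1 by omega, hmid1, hmid2, hhigh (2*n+2+1) (by omega),
        show 2*n+2+1-2 = 2*n+1 by omega]
    have hCC : (if R M M (f (2*n+1)) then (1:ℕ) else 0)
        = (if R M M (f (2*n+0+1)) then (1:ℕ) else 0) := by norm_num
    have hA0 : χ (2*n) = (if R (f (2*n-1)) (f (2*n)) (f (2*n+1)) then (1:ℕ) else 0) := rfl
    have hD : (if R (f (2*n)) (f (2*n+1)) (f (2*n+2)) then (1:ℕ) else 0)
        = (if R M (f (2*n+1)) (f (2*n+2)) then (1:ℕ) else 0) := by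
      by_cases h : R (f (2*n)) (f (2*n+1)) (f (2*n+2))
      · rw [if_pos h, if_pos (hBD.mp h)]
      · rw [if_neg h, if_neg (fun hh => h (hBD.mpr hh))]
    rw [hc1, hc2, e1, e2, hA, hB, hC, hA0, hD]
    ring
  · -- 1 ≤ g, g+1 ≤ 2n
    obtain ⟨g1, rfl⟩ : ∃ g1, g = g1 + 1 := ⟨g-1, by omega⟩
    have e1 : ∑ i ∈ Finset.Ioc 0 (2*n+2), χ' i
        = ∑ i ∈ Finset.Ioc 0 g1, χ i + χ' (g1+1) + χ' (g1+2) + χ' (g1+3) + χ' (g1+4)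
          + ∑ i ∈ Finset.Ioc (g1+2) (2*n), χ i := by
      rw [← Finset.sum_Ioc_consecutive χ' (show 0 ≤ g1+4 by omega)
          (show g1+4 ≤ 2*n+2 by omega),
        show g1+4 = g1+3+1 from rfl, Finset.sum_Ioc_succ_top (by omega),
        show g1+3 = g1+2+1 from rfl, Finset.sum_Ioc_succ_top (by omega),
        show g1+2 = g1+1+1 from rfl, Finset.sum_Ioc_succ_top (by omega),
        Finset.sum_Ioc_succ_top (by omega),
        Finset.sum_congr rfl (fun x hx => hagreeLow x (by
          simp only [Finset.mem_Ioc] at hx; omega)),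
        show g1+3+1 = (g1+2)+2 by omega, show 2*n+2 = (2*n)+2 from rfl,
        hmapsum (g1+2) (2*n) χ',
        Finset.sum_congr rfl (fun x hx => hagree x (by
          simp only [Finset.mem_Ioc] at hx; omega))]
    have e2 : ∑ i ∈ Finset.Ioc 0 (2*n), χ i
        = ∑ i ∈ Finset.Ioc 0 g1, χ i + χ (g1+1) + χ (g1+2)
          + ∑ i ∈ Finset.Ioc (g1+2) (2*n), χ i := by
      rw [← Finset.sum_Ioc_consecutive χ (show 0 ≤ g1+2 by omega) (show g1+2 ≤ 2*n by omega),
        show g1+2 = g1+1+1 from rfl, Finset.sum_Ioc_succ_top (by omega),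
        Finset.sum_Ioc_succ_top (by omega)]
    have hA : χ' (g1+1) = (if R (f (g1+1-1)) (f (g1+1)) M then (1:ℕ) else 0) := by
      simp only [hχ']
      rw [show g1+1-1 = g1 from rfl, hlow g1 (by omega), hlow (g1+1) (by omega),
        show g1+1+1 = g1+1+1 from rfl, hmid1]
    have hB : χ' (g1+2) = (if R (f (g1+1)) M M then (1:ℕ) else 0) := by
      simp only [hχ']
      rw [show g1+2-1 = g1+1 from rfl, hlow (g1+1) (by omega),
        show g1+2 = g1+1+1 from rfl, hmid1, show g1+1+1+1 = g1+1+2 from rfl, hmid2]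
    have hC : χ' (g1+3) = (if R M M (f (g1+1+1)) then (1:ℕ) else 0) := by
      simp only [hχ']
      rw [show g1+3-1 = g1+1+1 from rfl, show g1+1+1 = g1+1+1 from rfl, hmid1,
        show g1+3 = g1+1+2 from rfl, hmid2, hhigh (g1+1+2+1) (by omega),
        show g1+1+2+1-2 = g1+1+1 by omega]
    have hD : χ' (g1+4) = (if R M (f (g1+1+1)) (f (g1+1+2)) then (1:ℕ) else 0) := by
      simp only [hχ']
      rw [show g1+4-1 = g1+1+2 from rfl, hmid2, hhigh (g1+4) (by omega),
        hhigh (g1+4+1) (by omega), show g1+4-2 = g1+1+1 by omega,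
        show g1+4+1-2 = g1+1+2 by omega]
    have hA0 : χ (g1+1) = (if R (f (g1+1-1)) (f (g1+1)) (f (g1+1+1)) then (1:ℕ) else 0) := rfl
    have hB0 : χ (g1+2) = (if R (f (g1+1)) (f (g1+1+1)) (f (g1+1+2)) then (1:ℕ) else 0) := by
      simp only [hχ]
      rw [show g1+2-1 = g1+1 from rfl, show g1+1+1 = g1+2 from rfl,
        show g1+1+2 = g1+2+1 from rfl]
    rw [hc1, hc2, e1, e2, hA, hB, hC, hD, hA0, hB0]
    ring
end SPcnt
section SPstat

open Finset

variable {n : ℕ}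

lemma dpQ_eq_cnt {σ : Fin (2*n) → Fin (n+1)} (hF : StirF n (sval σ)) (hn : 1 ≤ n) :
    dpQ σ = cnt Rdp (sval σ) (2*n) := by
  rw [dpQ, cnt]
  congr 1
  apply Finset.ext
  intro i
  simp only [mem_filter, mem_Icc]; simp only [Rdp]
  constructor
  · rintro ⟨⟨h1, h2⟩, h3⟩
    exact ⟨⟨by omega, by omega⟩, h3⟩
  · rintro ⟨⟨h1, h2⟩, h3, h4⟩
    have hpos := hF.pos
    refine ⟨⟨?_, ?_⟩, h3, h4⟩
    · rcases (by omega : i = 1 ∨ 2 ≤ i) with rfl | h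
      · rw [show (1:ℕ)-1 = 0 from rfl] at h3
        have : sval σ 0 = 0 := hF.2.1 0 (by omega)
        omega
      · omega
    · rcases (by omega : i = 2*n ∨ i ≤ 2*n - 1) with rfl | h
      · have h5 : sval σ (2*n+1) = 0 := hF.2.1 _ (by omega)
        have := hpos (2*n) (by omega) (by omega)
        omega
      · omega

lemma lapQ_eq_cnt_full {σ : Fin (2*n) → Fin (n+1)} (hF : StirF n (sval σ)) (hn : 1 ≤ n) :
    lapQ σ = cnt Rlap (sval σ) (2*n) := by
  rw [lapQ, cnt]
  congr 1
  apply Finset.ext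
  intro i
  simp only [mem_filter, mem_Icc]; simp only [Rlap]
  constructor
  · rintro ⟨⟨h1, h2⟩, h3⟩
    exact ⟨⟨by omega, by omega⟩, h3⟩
  · rintro ⟨⟨h1, h2⟩, h3, h4⟩
    refine ⟨⟨by omega, ?_⟩, h3, h4⟩
    rcases (by omega : i = 2*n ∨ i ≤ 2*n - 1) with rfl | h
    · have h5 : sval σ (2*n+1) = 0 := hF.2.1 _ (by omega)
      have := hF.pos (2*n) (by omega) (by omega)
      omega
    · omega

lemma dascQ_eq_cnt_full {σ : Fin (2*n) → Fin (n+1)} (hF : StirF n (sval σ)) (hn : 1 ≤ n) :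
    dascQ σ = cnt Rdasc (sval σ) (2*n) := by
  rw [dascQ, cnt]
  congr 1
  apply Finset.ext
  intro i
  simp only [mem_filter, mem_Icc]; simp only [Rdasc]
  constructor
  · rintro ⟨⟨h1, h2⟩, h3⟩
    exact ⟨⟨by omega, by omega⟩, h3⟩
  · rintro ⟨⟨h1, h2⟩, h3, h4⟩
    refine ⟨⟨by omega, ?_⟩, h3, h4⟩
    rcases (by omega : i = 2*n ∨ i ≤ 2*n - 1) with rfl | h
    · have h5 : sval σ (2*n+1) = 0 := hF.2.1 _ (by omega)
      omega
    · omega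

/-- Per-gap statistic relations for the inserted permutation. -/
lemma gap_stats {σ : Fin (2*n) → Fin (n+1)} (hmem : σ ∈ StirlingSet n)
    (hn : 1 ≤ n) {g : ℕ} (hg : g ≤ 2*n) :
    (lapQ (insF n σ g) + (if Rlap (sval σ (g-1)) (sval σ g) (sval σ (g+1)) then 1 else 0)
        + (if Rlap (sval σ g) (sval σ (g+1)) (sval σ (g+2)) then 1 else 0)
      = lapQ σ + 1) ∧
    (dascQ (insF n σ g)
        + (if Rdasc (sval σ (g-1)) (sval σ g) (sval σ (g+1)) then 1 else 0)
        + (if Rdasc (sval σ g) (sval σ (g+1)) (sval σ (g+2)) then 1 else 0)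
      = dascQ σ + (if sval σ (g-1) < sval σ g then 1 else 0)) ∧
    (dpQ (insF n σ g) + (if Rdp (sval σ (g-1)) (sval σ g) (sval σ (g+1)) then 1 else 0)
        + (if Rdp (sval σ g) (sval σ (g+1)) (sval σ (g+2)) then 1 else 0)
      = dpQ σ + (if sval σ (g+1) = sval σ (g+2) then 1 else 0)) := by
  have hF := stirF_of_mem hmem
  have hF' := stirF_insF hF hg
  set f := sval σ with hfdef
  set F := sval (insF n σ g) with hFdef
  have hlow : ∀ j, j ≤ g → F j = f j := fun j hj => insF_low hg hj
  have hmid1 : F (g+1) = n+1 := insF_mid hg (by omega) (by omega)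
  have hmid2 : F (g+2) = n+1 := insF_mid hg (by omega) (by omega)
  have hhigh : ∀ j, g+3 ≤ j → F j = f (j-2) := fun j hj => insF_high hg (by omega)
  have hf0 : f 0 = 0 := hF.2.1 0 (by omega)
  have hz1 : f (2*n+1) = 0 := hF.2.1 _ (by omega)
  have hz2 : f (2*n+2) = 0 := hF.2.1 _ (by omega)
  have hpos2n : 1 ≤ f (2*n) := hF.pos _ (by omega) (by omega)
  have hfle : ∀ i, f i ≤ n := sval_le σ
  -- bridges for the inserted permutation (order n+1)
  have bl : lapQ (insF n σ g) = cnt Rlap F (2*(n+1)) := lapQ_eq_cnt_full hF' (by omega)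
  have bd : dascQ (insF n σ g) = cnt Rdasc F (2*(n+1)) := dascQ_eq_cnt_full hF' (by omega)
  have bp : dpQ (insF n σ g) = cnt Rdp F (2*(n+1)) := dpQ_eq_cnt hF' (by omega)
  have e2 : 2*(n+1) = 2*n+2 := by omega
  rw [e2] at bl bd bp
  refine ⟨?_, ?_, ?_⟩
  · have h := cnt_shift Rlap f F (n+1) n g hn hg hlow hmid1 hmid2 hhigh hf0
      (fun x => by simp [Rlap]) (by simp [Rlap, hz1, hz2])
    rw [lapQ_eq_cnt_full hF hn, bl, ← hfdef]
    have eA : (if Rlap (f (g-1)) (f g) (n+1) then (1:ℕ) else 0) = 0 := by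
      have hh := hfle g
      have hno : ¬ Rlap (f (g-1)) (f g) (n+1) := by rintro ⟨h1, h2⟩; omega
      rw [if_neg hno]
    have eB : (if Rlap (f g) (n+1) (n+1) then (1:ℕ) else 0) = 1 := by
      have hh := hfle g
      have hyes : Rlap (f g) (n+1) (n+1) := ⟨by omega, rfl⟩
      rw [if_pos hyes]
    have eC : (if Rlap (n+1) (n+1) (f (g+1)) then (1:ℕ) else 0) = 0 := by
      have hno : ¬ Rlap (n+1) (n+1) (f (g+1)) := by rintro ⟨h1, h2⟩; omega
      rw [if_neg hno]
    have eD : (if Rlap (n+1) (f (g+1)) (f (g+2)) then (1:ℕ) else 0) = 0 := by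
      have hh := hfle (g+1)
      have hno : ¬ Rlap (n+1) (f (g+1)) (f (g+2)) := by rintro ⟨h1, h2⟩; omega
      rw [if_neg hno]
    rw [eA, eB, eC, eD] at h
    omega
  · have h := cnt_shift Rdasc f F (n+1) n g hn hg hlow hmid1 hmid2 hhigh hf0
      (fun x => by simp [Rdasc]) (by simp [Rdasc, hz1, hz2])
    rw [dascQ_eq_cnt_full hF hn, bd, ← hfdef]
    have eA : (if Rdasc (f (g-1)) (f g) (n+1) then (1:ℕ) else 0)
        = (if f (g-1) < f g then 1 else 0) := by
      have hh := hfle g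
      by_cases hc : f (g-1) < f g
      · have hyes : Rdasc (f (g-1)) (f g) (n+1) := ⟨hc, by omega⟩
        rw [if_pos hc, if_pos hyes]
      · have hno : ¬ Rdasc (f (g-1)) (f g) (n+1) := fun hh2 => hc hh2.1
        rw [if_neg hc, if_neg hno]
    have eB : (if Rdasc (f g) (n+1) (n+1) then (1:ℕ) else 0) = 0 := by
      have hno : ¬ Rdasc (f g) (n+1) (n+1) := by rintro ⟨h1, h2⟩; omega
      rw [if_neg hno]
    have eC : (if Rdasc (n+1) (n+1) (f (g+1)) then (1:ℕ) else 0) = 0 := by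
      have hno : ¬ Rdasc (n+1) (n+1) (f (g+1)) := by rintro ⟨h1, h2⟩; omega
      rw [if_neg hno]
    have eD : (if Rdasc (n+1) (f (g+1)) (f (g+2)) then (1:ℕ) else 0) = 0 := by
      have hh := hfle (g+1)
      have hno : ¬ Rdasc (n+1) (f (g+1)) (f (g+2)) := by rintro ⟨h1, h2⟩; omega
      rw [if_neg hno]
    rw [eA, eB, eC, eD] at h
    omega
  · have h := cnt_shift Rdp f F (n+1) n g hn hg hlow hmid1 hmid2 hhigh hf0
      (fun x => by simp [Rdp]) (by
        constructor
        · rintro ⟨-, h2⟩; exact ⟨by rw [hz1]; omega, h2⟩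
        · rintro ⟨-, h2⟩; exact ⟨by rw [hz1]; omega, h2⟩)
    rw [dpQ_eq_cnt hF hn, bp, ← hfdef]
    have eA : (if Rdp (f (g-1)) (f g) (n+1) then (1:ℕ) else 0) = 0 := by
      have hh := hfle g
      have hno : ¬ Rdp (f (g-1)) (f g) (n+1) := by rintro ⟨h1, h2⟩; omega
      rw [if_neg hno]
    have eB : (if Rdp (f g) (n+1) (n+1) then (1:ℕ) else 0) = 0 := by
      have hh := hfle g
      have hno : ¬ Rdp (f g) (n+1) (n+1) := by rintro ⟨h1, h2⟩; omega
      rw [if_neg hno]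
    have eC : (if Rdp (n+1) (n+1) (f (g+1)) then (1:ℕ) else 0) = 0 := by
      have hno : ¬ Rdp (n+1) (n+1) (f (g+1)) := by rintro ⟨h1, h2⟩; omega
      rw [if_neg hno]
    have eD : (if Rdp (n+1) (f (g+1)) (f (g+2)) then (1:ℕ) else 0)
        = (if f (g+1) = f (g+2) then 1 else 0) := by
      have hh := hfle (g+1)
      by_cases hc : f (g+1) = f (g+2)
      · have hyes : Rdp (n+1) (f (g+1)) (f (g+2)) := ⟨by omega, hc⟩
        rw [if_pos hc, if_pos hyes]
      · have hno : ¬ Rdp (n+1) (f (g+1)) (f (g+2)) := fun hh2 => hc hh2.2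
        rw [if_neg hc, if_neg hno]
    rw [eA, eB, eC, eD] at h
    omega

end SPstat
section SPclass

open Finset

variable {n : ℕ} {σ : Fin (2*n) → Fin (n+1)} {g : ℕ}

lemma class_P (hmem : σ ∈ StirlingSet n) (hn : 1 ≤ n) (hg : g ≤ 2*n)
    (hc : sval σ g < sval σ (g+1) ∧ sval σ (g+1) = sval σ (g+2)) :
    lapQ (insF n σ g) = lapQ σ ∧ dascQ (insF n σ g) = dascQ σ ∧
      dpQ (insF n σ g) = dpQ σ + 1 := by
  obtain ⟨h1, h2, h3⟩ := gap_stats hmem hn hg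
  have hF := stirF_of_mem hmem
  have eR : ¬ Rlap (sval σ (g-1)) (sval σ g) (sval σ (g+1)) := by
    rintro ⟨-, e⟩; omega
  have eP : Rlap (sval σ g) (sval σ (g+1)) (sval σ (g+2)) := ⟨hc.1, hc.2⟩
  rw [if_neg eR, if_pos eP] at h1
  have eQ : ¬ Rdasc (sval σ g) (sval σ (g+1)) (sval σ (g+2)) := by
    rintro ⟨-, e⟩; omega
  have eDg : (if Rdasc (sval σ (g-1)) (sval σ g) (sval σ (g+1)) then (1:ℕ) else 0)
      = (if sval σ (g-1) < sval σ g then 1 else 0) := by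
    by_cases ha : sval σ (g-1) < sval σ g
    · have : Rdasc (sval σ (g-1)) (sval σ g) (sval σ (g+1)) := ⟨ha, hc.1⟩
      rw [if_pos ha, if_pos this]
    · have : ¬ Rdasc (sval σ (g-1)) (sval σ g) (sval σ (g+1)) := fun hh => ha hh.1
      rw [if_neg ha, if_neg this]
  rw [eDg, if_neg eQ] at h2
  have eS : ¬ Rdp (sval σ (g-1)) (sval σ g) (sval σ (g+1)) := by
    rintro ⟨-, e⟩; omega
  have eD1 : ¬ Rdp (sval σ g) (sval σ (g+1)) (sval σ (g+2)) := by
    rintro ⟨e, -⟩; omega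
  rw [if_neg eS, if_neg eD1, if_pos hc.2] at h3
  omega

lemma class_Q (hmem : σ ∈ StirlingSet n) (hn : 1 ≤ n) (hg : g ≤ 2*n)
    (hc : sval σ g < sval σ (g+1) ∧ sval σ (g+1) < sval σ (g+2)) :
    lapQ (insF n σ g) = lapQ σ + 1 ∧ dascQ (insF n σ g) + 1 = dascQ σ ∧
      dpQ (insF n σ g) = dpQ σ := by
  obtain ⟨h1, h2, h3⟩ := gap_stats hmem hn hg
  have eR : ¬ Rlap (sval σ (g-1)) (sval σ g) (sval σ (g+1)) := by
    rintro ⟨-, e⟩; omega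
  have eP : ¬ Rlap (sval σ g) (sval σ (g+1)) (sval σ (g+2)) := by
    rintro ⟨-, e⟩; omega
  rw [if_neg eR, if_neg eP] at h1
  have eQ : Rdasc (sval σ g) (sval σ (g+1)) (sval σ (g+2)) := ⟨hc.1, hc.2⟩
  have eDg : (if Rdasc (sval σ (g-1)) (sval σ g) (sval σ (g+1)) then (1:ℕ) else 0)
      = (if sval σ (g-1) < sval σ g then 1 else 0) := by
    by_cases ha : sval σ (g-1) < sval σ g
    · have : Rdasc (sval σ (g-1)) (sval σ g) (sval σ (g+1)) := ⟨ha, hc.1⟩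
      rw [if_pos ha, if_pos this]
    · have : ¬ Rdasc (sval σ (g-1)) (sval σ g) (sval σ (g+1)) := fun hh => ha hh.1
      rw [if_neg ha, if_neg this]
  rw [eDg, if_pos eQ] at h2
  have eS : ¬ Rdp (sval σ (g-1)) (sval σ g) (sval σ (g+1)) := by
    rintro ⟨-, e⟩; omega
  have eD1 : ¬ Rdp (sval σ g) (sval σ (g+1)) (sval σ (g+2)) := by
    rintro ⟨e, -⟩; omega
  rw [if_neg eS, if_neg eD1, if_neg (by omega : ¬ sval σ (g+1) = sval σ (g+2))] at h3
  omega

lemma class_R (hmem : σ ∈ StirlingSet n) (hn : 1 ≤ n) (hg : g ≤ 2*n)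
    (hc : sval σ (g-1) < sval σ g ∧ sval σ g = sval σ (g+1)) :
    lapQ (insF n σ g) = lapQ σ ∧ dascQ (insF n σ g) = dascQ σ + 1 ∧
      dpQ (insF n σ g) = dpQ σ := by
  obtain ⟨h1, h2, h3⟩ := gap_stats hmem hn hg
  have hF := stirF_of_mem hmem
  have hg1 : 1 ≤ g := by
    by_contra hh
    have : g = 0 := by omega
    subst this
    rw [show (0:ℕ)-1 = 0 from rfl] at hc
    omega
  have hpos : 1 ≤ sval σ g := by
    have := hF.pos g hg1 hg
    omega
  have hnt := hF.noTriple hg1 hpos hc.2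
  have eR : Rlap (sval σ (g-1)) (sval σ g) (sval σ (g+1)) := ⟨hc.1, hc.2⟩
  have eP : ¬ Rlap (sval σ g) (sval σ (g+1)) (sval σ (g+2)) := by
    rintro ⟨e, -⟩; omega
  rw [if_pos eR, if_neg eP] at h1
  have eQ : ¬ Rdasc (sval σ g) (sval σ (g+1)) (sval σ (g+2)) := by
    rintro ⟨e, -⟩; omega
  have eDg : ¬ Rdasc (sval σ (g-1)) (sval σ g) (sval σ (g+1)) := by
    rintro ⟨-, e⟩; omega
  rw [if_neg eDg, if_pos hc.1, if_neg eQ] at h2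
  have eS : ¬ Rdp (sval σ (g-1)) (sval σ g) (sval σ (g+1)) := by
    rintro ⟨e, -⟩; omega
  have eD1 : ¬ Rdp (sval σ g) (sval σ (g+1)) (sval σ (g+2)) := by
    rintro ⟨e, -⟩; omega
  rw [if_neg eS, if_neg eD1, if_neg hnt] at h3
  omega

lemma class_S (hmem : σ ∈ StirlingSet n) (hn : 1 ≤ n) (hg : g ≤ 2*n)
    (hc : sval σ g < sval σ (g-1) ∧ sval σ g = sval σ (g+1)) :
    lapQ (insF n σ g) = lapQ σ + 1 ∧ dascQ (insF n σ g) = dascQ σ ∧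
      dpQ (insF n σ g) + 1 = dpQ σ := by
  obtain ⟨h1, h2, h3⟩ := gap_stats hmem hn hg
  have hF := stirF_of_mem hmem
  have hg1 : 1 ≤ g := by
    by_contra hh
    have : g = 0 := by omega
    subst this
    rw [show (0:ℕ)-1 = 0 from rfl] at hc
    omega
  have hpos : 1 ≤ sval σ g := by
    have := hF.pos g hg1 hg
    omega
  have hnt := hF.noTriple hg1 hpos hc.2
  have eR : ¬ Rlap (sval σ (g-1)) (sval σ g) (sval σ (g+1)) := by
    rintro ⟨e, -⟩; omega
  have eP : ¬ Rlap (sval σ g) (sval σ (g+1)) (sval σ (g+2)) := by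
    rintro ⟨e, -⟩; omega
  rw [if_neg eR, if_neg eP] at h1
  have eQ : ¬ Rdasc (sval σ g) (sval σ (g+1)) (sval σ (g+2)) := by
    rintro ⟨e, -⟩; omega
  have eDg : ¬ Rdasc (sval σ (g-1)) (sval σ g) (sval σ (g+1)) := by
    rintro ⟨e, -⟩; omega
  rw [if_neg eDg, if_neg (by omega : ¬ sval σ (g-1) < sval σ g), if_neg eQ] at h2
  have eS : Rdp (sval σ (g-1)) (sval σ g) (sval σ (g+1)) := ⟨hc.1, hc.2⟩
  have eD1 : ¬ Rdp (sval σ g) (sval σ (g+1)) (sval σ (g+2)) := by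
    rintro ⟨e, -⟩; omega
  rw [if_pos eS, if_neg eD1, if_neg hnt] at h3
  omega

lemma class_T (hmem : σ ∈ StirlingSet n) (hn : 1 ≤ n) (hg : g ≤ 2*n)
    (hnP : ¬ (sval σ g < sval σ (g+1) ∧ sval σ (g+1) = sval σ (g+2)))
    (hnQ : ¬ (sval σ g < sval σ (g+1) ∧ sval σ (g+1) < sval σ (g+2)))
    (hnR : ¬ (sval σ (g-1) < sval σ g ∧ sval σ g = sval σ (g+1)))
    (hnS : ¬ (sval σ g < sval σ (g-1) ∧ sval σ g = sval σ (g+1))) :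
    lapQ (insF n σ g) = lapQ σ + 1 ∧ dascQ (insF n σ g) = dascQ σ ∧
      dpQ (insF n σ g) = dpQ σ := by
  obtain ⟨h1, h2, h3⟩ := gap_stats hmem hn hg
  have hF := stirF_of_mem hmem
  -- no ascent into position g
  have hag : ¬ sval σ (g-1) < sval σ g := by
    intro hasc
    have hg1 : 1 ≤ g := by
      by_contra hh
      have : g = 0 := by omega
      subst this
      rw [show (0:ℕ)-1 = 0 from rfl] at hasc
      omega
    have hle1 := hF.L1 hg1 hg hasc
    rcases Nat.lt_or_ge (sval σ g) (sval σ (g+1)) with hlt | hge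
    · have hg2 : g + 1 ≤ 2*n := by
        by_contra hh
        have : sval σ (g+1) = 0 := hF.2.1 _ (by omega)
        omega
      have hle2 : sval σ (g+1) ≤ sval σ (g+2) := hF.L1 (i := g+1) (by omega) hg2
        (by rw [show g+1-1 = g by omega]; exact hlt)
      rcases Nat.lt_or_ge (sval σ (g+1)) (sval σ (g+2)) with hlt2 | hge2
      · exact hnQ ⟨hlt, hlt2⟩
      · exact hnP ⟨hlt, by omega⟩
    · exact hnR ⟨hasc, by omega⟩
  have eR : ¬ Rlap (sval σ (g-1)) (sval σ g) (sval σ (g+1)) := fun hh => hag hh.1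
  have eP : ¬ Rlap (sval σ g) (sval σ (g+1)) (sval σ (g+2)) := fun hh => hnP ⟨hh.1, hh.2⟩
  rw [if_neg eR, if_neg eP] at h1
  have eQ : ¬ Rdasc (sval σ g) (sval σ (g+1)) (sval σ (g+2)) := fun hh => hnQ ⟨hh.1, hh.2⟩
  have eDg : ¬ Rdasc (sval σ (g-1)) (sval σ g) (sval σ (g+1)) := fun hh => hag hh.1
  rw [if_neg eDg, if_neg hag, if_neg eQ] at h2
  have eS : ¬ Rdp (sval σ (g-1)) (sval σ g) (sval σ (g+1)) := fun hh => hnS ⟨hh.1, hh.2⟩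
  have hplat : (if sval σ (g+1) = sval σ (g+2) then (1:ℕ) else 0)
      = (if Rdp (sval σ g) (sval σ (g+1)) (sval σ (g+2)) then (1:ℕ) else 0) := by
    by_cases hc : sval σ (g+1) = sval σ (g+2)
    · have hlt : sval σ (g+1) < sval σ g := by
        rcases Nat.lt_or_ge (sval σ (g+1)) (sval σ g) with h | h
        · exact h
        · exfalso
          rcases Nat.eq_or_lt_of_le h with he | hl
          · -- sval σ g = sval σ (g+1)
            have hg0 : g ≠ 0 := by
              intro hh
              subst hh
              have h0 : sval σ 0 = 0 := hF.2.1 0 (by omega)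
              have h1' : 1 ≤ sval σ (0+1) := hF.pos (0+1) (by omega) (by omega)
              omega
            have hgle : g ≤ 2*n := hg
            have hpos : 1 ≤ sval σ g := by
              have := hF.pos g (by omega) hg
              omega
            exact hF.noTriple (i := g) (by omega) hpos he hc
          · exact hnP ⟨hl, hc⟩
      rw [if_pos hc, if_pos ⟨hlt, hc⟩]
    · have : ¬ Rdp (sval σ g) (sval σ (g+1)) (sval σ (g+2)) := fun hh => hc hh.2
      rw [if_neg hc, if_neg this]
  rw [if_neg eS, hplat] at h3
  omega

end SPclass
section SPcount

open Finset

variable {n : ℕ} {σ : Fin (2*n) → Fin (n+1)}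

lemma countP (hmem : σ ∈ StirlingSet n) (hn : 1 ≤ n) :
    ((Finset.range (2*n+1)).filter
      (fun g => sval σ g < sval σ (g+1) ∧ sval σ (g+1) = sval σ (g+2))).card = lapQ σ := by
  have hF := stirF_of_mem hmem
  rw [lapQ]
  apply Finset.card_nbij' (fun g => g + 1) (fun i => i - 1)
  · intro g hg
    simp only [mem_coe, mem_filter, mem_range, mem_Icc] at hg ⊢
    obtain ⟨hb, hc1, hc2⟩ := hg
    have hp1 : 1 ≤ sval σ (g+1) := by omega
    have hle1 : g + 1 ≤ 2*n := by
      by_contra hh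
      have := hF.2.1 (g+1) (by omega)
      omega
    have hle2 : g + 2 ≤ 2*n := by
      by_contra hh
      have := hF.2.1 (g+2) (by omega)
      omega
    refine ⟨⟨by omega, by omega⟩, ?_, ?_⟩
    · rw [show g+1-1 = g by omega]; exact hc1
    · rw [show g+1+1 = g+2 by omega]; exact hc2
  · intro i hi
    simp only [mem_coe, mem_filter, mem_Icc, mem_range] at hi ⊢
    obtain ⟨⟨h1, h2⟩, hc1, hc2⟩ := hi
    refine ⟨by omega, ?_, ?_⟩
    · rw [show i-1+1 = i by omega]; exact hc1
    · rw [show i-1+1 = i by omega, show i-1+2 = i+1 by omega]; exact hc2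
  · intro g _; dsimp only; omega
  · intro i hi
    simp only [mem_coe, mem_filter, mem_Icc] at hi
    dsimp only; omega

lemma countQ (hmem : σ ∈ StirlingSet n) (hn : 1 ≤ n) :
    ((Finset.range (2*n+1)).filter
      (fun g => sval σ g < sval σ (g+1) ∧ sval σ (g+1) < sval σ (g+2))).card = dascQ σ := by
  have hF := stirF_of_mem hmem
  rw [dascQ]
  apply Finset.card_nbij' (fun g => g + 1) (fun i => i - 1)
  · intro g hg
    simp only [mem_coe, mem_filter, mem_range, mem_Icc] at hg ⊢
    obtain ⟨hb, hc1, hc2⟩ := hg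
    have hle2 : g + 2 ≤ 2*n := by
      by_contra hh
      have := hF.2.1 (g+2) (by omega)
      omega
    refine ⟨⟨by omega, by omega⟩, ?_, ?_⟩
    · rw [show g+1-1 = g by omega]; exact hc1
    · rw [show g+1+1 = g+2 by omega]; exact hc2
  · intro i hi
    simp only [mem_coe, mem_filter, mem_Icc, mem_range] at hi ⊢
    obtain ⟨⟨h1, h2⟩, hc1, hc2⟩ := hi
    refine ⟨by omega, ?_, ?_⟩
    · rw [show i-1+1 = i by omega]; exact hc1
    · rw [show i-1+1 = i by omega, show i-1+2 = i+1 by omega]; exact hc2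
  · intro g _; dsimp only; omega
  · intro i hi
    simp only [mem_coe, mem_filter, mem_Icc] at hi
    dsimp only; omega

lemma countR (hmem : σ ∈ StirlingSet n) (hn : 1 ≤ n) :
    ((Finset.range (2*n+1)).filter
      (fun g => sval σ (g-1) < sval σ g ∧ sval σ g = sval σ (g+1))).card = lapQ σ := by
  have hF := stirF_of_mem hmem
  rw [lapQ]
  congr 1
  apply Finset.ext
  intro g
  simp only [mem_filter, mem_range, mem_Icc]
  constructor
  · rintro ⟨hb, hc1, hc2⟩
    refine ⟨⟨?_, ?_⟩, hc1, hc2⟩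
    · rcases Nat.eq_zero_or_pos g with rfl | h
      · rw [show (0:ℕ)-1 = 0 from rfl] at hc1
        omega
      · omega
    · rcases (by omega : g ≤ 2*n - 1 ∨ g = 2*n) with h | rfl
      · omega
      · have h1 := hF.2.1 (2*n+1) (by omega)
        omega
  · rintro ⟨⟨h1, h2⟩, hc1, hc2⟩
    exact ⟨by omega, hc1, hc2⟩

lemma countS (hmem : σ ∈ StirlingSet n) (hn : 1 ≤ n) :
    ((Finset.range (2*n+1)).filter
      (fun g => sval σ g < sval σ (g-1) ∧ sval σ g = sval σ (g+1))).card = dpQ σ := by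
  have hF := stirF_of_mem hmem
  rw [dpQ]
  congr 1
  apply Finset.ext
  intro g
  simp only [mem_filter, mem_range, mem_Icc]
  constructor
  · rintro ⟨hb, hc1, hc2⟩
    have hg1 : 1 ≤ g := by
      rcases Nat.eq_zero_or_pos g with rfl | h
      · rw [show (0:ℕ)-1 = 0 from rfl] at hc1
        omega
      · omega
    have hg2 : 2 ≤ g := by
      rcases (by omega : g = 1 ∨ 2 ≤ g) with rfl | h
      · rw [show (1:ℕ)-1 = 0 from rfl] at hc1
        have := hF.2.1 0 (by omega)
        omega
      · omega
    have hpos : 1 ≤ sval σ g := hF.pos g (by omega) (by omega)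
    refine ⟨⟨hg2, ?_⟩, hc1, hc2⟩
    rcases (by omega : g ≤ 2*n - 1 ∨ g = 2*n) with h | rfl
    · omega
    · have h1 := hF.2.1 (2*n+1) (by omega)
      omega
  · rintro ⟨⟨h1, h2⟩, hc1, hc2⟩
    exact ⟨by omega, hc1, hc2⟩

end SPcount
section SPsum

open Finset MvPolynomial

noncomputable def wgt (m : ℕ) (τ : Fin (2*m) → Fin (m+1)) : MvPolynomial (Fin 5) ℚ :=
  (X 0 * X 1) ^ lapQ τ * X 4 ^ dascQ τ * X 3 ^ dpQ τ *
    X 2 ^ (2*m - 2*lapQ τ - dascQ τ - dpQ τ)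

variable {n : ℕ} {σ : Fin (2*n) → Fin (n+1)}

lemma sum_gaps (hmem : σ ∈ StirlingSet n) (hn : 1 ≤ n) :
    ∑ g ∈ Finset.range (2*n+1), wgt (n+1) (insF n σ g)
      = lapQ σ • ((X 0 * X 1 : MvPolynomial (Fin 5) ℚ) ^ lapQ σ * X 4 ^ dascQ σ
            * X 3 ^ (dpQ σ + 1)
            * X 2 ^ (2*n - 2*lapQ σ - dascQ σ - dpQ σ + 1))
        + dascQ σ • ((X 0 * X 1) ^ (lapQ σ + 1) * X 4 ^ (dascQ σ - 1) * X 3 ^ dpQ σ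
            * X 2 ^ (2*n - 2*lapQ σ - dascQ σ - dpQ σ + 1))
        + lapQ σ • ((X 0 * X 1) ^ lapQ σ * X 4 ^ (dascQ σ + 1) * X 3 ^ dpQ σ
            * X 2 ^ (2*n - 2*lapQ σ - dascQ σ - dpQ σ + 1))
        + dpQ σ • ((X 0 * X 1) ^ (lapQ σ + 1) * X 4 ^ dascQ σ * X 3 ^ (dpQ σ - 1)
            * X 2 ^ (2*n - 2*lapQ σ - dascQ σ - dpQ σ + 1))
        + (2*n - 2*lapQ σ - dascQ σ - dpQ σ + 1) •
            ((X 0 * X 1) ^ (lapQ σ + 1) * X 4 ^ dascQ σ * X 3 ^ dpQ σ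
            * X 2 ^ (2*n - 2*lapQ σ - dascQ σ - dpQ σ)) := by
  classical
  have hF := stirF_of_mem hmem
  set W := fun g => wgt (n+1) (insF n σ g) with hW
  set s := Finset.range (2*n+1) with hs
  set Pc := fun g => sval σ g < sval σ (g+1) ∧ sval σ (g+1) = sval σ (g+2) with hPc
  set Qc := fun g => sval σ g < sval σ (g+1) ∧ sval σ (g+1) < sval σ (g+2) with hQc
  set Rc := fun g => sval σ (g-1) < sval σ g ∧ sval σ g = sval σ (g+1) with hRc
  set Sc := fun g => sval σ g < sval σ (g-1) ∧ sval σ g = sval σ (g+1) with hSc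
  set s1 := s.filter (fun g => ¬ Pc g) with hs1
  set s2 := s1.filter (fun g => ¬ Qc g) with hs2
  set s3 := s2.filter (fun g => ¬ Rc g) with hs3
  set s4 := s3.filter (fun g => ¬ Sc g) with hs4
  have eQ : s1.filter Qc = s.filter Qc := by
    rw [hs1, Finset.filter_filter]
    apply Finset.filter_congr
    intro g _
    simp only [hPc, hQc]
    constructor
    · rintro ⟨-, h⟩; exact h
    · intro h; exact ⟨fun hp => by omega, h⟩
  have eR : s2.filter Rc = s.filter Rc := by
    rw [hs2, hs1, Finset.filter_filter, Finset.filter_filter]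
    apply Finset.filter_congr
    intro g _
    simp only [hPc, hQc, hRc]
    constructor
    · rintro ⟨-, -, h⟩; exact h
    · intro h
      exact ⟨fun hp => by omega, fun hq => by omega, h⟩
  have eS : s3.filter Sc = s.filter Sc := by
    rw [hs3, hs2, hs1, Finset.filter_filter, Finset.filter_filter, Finset.filter_filter]
    apply Finset.filter_congr
    intro g _
    simp only [hPc, hQc, hRc, hSc]
    constructor
    · rintro ⟨-, -, -, h⟩; exact h
    · intro h
      exact ⟨fun hp => by omega, fun hq => by omega, fun hr => by omega, h⟩
  -- cardinalities
  have cP : (s.filter Pc).card = lapQ σ := countP hmem hn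
  have cQ : (s.filter Qc).card = dascQ σ := countQ hmem hn
  have cR : (s.filter Rc).card = lapQ σ := countR hmem hn
  have cS : (s.filter Sc).card = dpQ σ := countS hmem hn
  have hpart : (s.filter Pc).card + ((s1.filter Qc).card + ((s2.filter Rc).card
      + ((s3.filter Sc).card + s4.card))) = 2*n+1 := by
    rw [hs4, hs3, hs2, hs1]
    rw [Finset.card_filter_add_card_filter_not (s := s2.filter (fun g => ¬ Rc g)) Sc,
      Finset.card_filter_add_card_filter_not (s := s1.filter (fun g => ¬ Qc g)) Rc,
      Finset.card_filter_add_card_filter_not (s := s.filter (fun g => ¬ Pc g)) Qc,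
      Finset.card_filter_add_card_filter_not (s := s) Pc]
    rw [hs, Finset.card_range]
  rw [eQ, eR, eS, cP, cQ, cR, cS] at hpart
  -- 2n is in the T class
  have hz1 : sval σ (2*n+1) = 0 := hF.2.1 _ (by omega)
  have hz2 : sval σ (2*n+2) = 0 := hF.2.1 _ (by omega)
  have hpos2n : 1 ≤ sval σ (2*n) := hF.pos _ (by omega) (by omega)
  have hTmem : 2*n ∈ s4 := by
    rw [hs4, hs3, hs2, hs1]
    simp only [Finset.mem_filter, Finset.mem_range, hs, hPc, hQc, hRc, hSc]
    refine ⟨⟨⟨⟨by omega, fun h => by omega⟩, fun h => by omega⟩, fun h => by omega⟩,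
      fun h => by omega⟩
  have hE : 2*lapQ σ + dascQ σ + dpQ σ ≤ 2*n := by
    have := Finset.card_pos.mpr ⟨2*n, hTmem⟩
    omega
  -- sum decomposition
  have d0 : ∑ g ∈ s, W g = ∑ g ∈ s.filter Pc, W g + ∑ g ∈ s1, W g :=
    (Finset.sum_filter_add_sum_filter_not s Pc W).symm
  have d1 : ∑ g ∈ s1, W g = ∑ g ∈ s1.filter Qc, W g + ∑ g ∈ s2, W g :=
    (Finset.sum_filter_add_sum_filter_not s1 Qc W).symm
  have d2 : ∑ g ∈ s2, W g = ∑ g ∈ s2.filter Rc, W g + ∑ g ∈ s3, W g :=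
    (Finset.sum_filter_add_sum_filter_not s2 Rc W).symm
  have d3 : ∑ g ∈ s3, W g = ∑ g ∈ s3.filter Sc, W g + ∑ g ∈ s4, W g :=
    (Finset.sum_filter_add_sum_filter_not s3 Sc W).symm
  -- constant values on each class
  have vP : ∑ g ∈ s.filter Pc, W g = (s.filter Pc).card •
      ((X 0 * X 1 : MvPolynomial (Fin 5) ℚ) ^ lapQ σ * X 4 ^ dascQ σ * X 3 ^ (dpQ σ + 1)
        * X 2 ^ (2*n - 2*lapQ σ - dascQ σ - dpQ σ + 1)) := by
    rw [Finset.sum_congr rfl (fun g hg => ?_), Finset.sum_const]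
    simp only [Finset.mem_filter, hs, Finset.mem_range, hPc] at hg
    obtain ⟨hb, hc⟩ := hg
    have hst := class_P hmem hn (by omega) hc
    rw [hW]
    simp only [wgt]
    rw [hst.1, hst.2.1, hst.2.2,
      show 2*(n+1) - 2*lapQ σ - dascQ σ - (dpQ σ + 1)
        = 2*n - 2*lapQ σ - dascQ σ - dpQ σ + 1 by omega]
  have vQ : ∑ g ∈ s1.filter Qc, W g = (s.filter Qc).card •
      ((X 0 * X 1 : MvPolynomial (Fin 5) ℚ) ^ (lapQ σ + 1) * X 4 ^ (dascQ σ - 1) * X 3 ^ dpQ σ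
        * X 2 ^ (2*n - 2*lapQ σ - dascQ σ - dpQ σ + 1)) := by
    rw [eQ, Finset.sum_congr rfl (fun g hg => ?_), Finset.sum_const]
    simp only [Finset.mem_filter, hs, Finset.mem_range, hQc] at hg
    obtain ⟨hb, hc⟩ := hg
    have hst := class_Q hmem hn (by omega) hc
    rw [hW]
    simp only [wgt]
    rw [hst.1, show dascQ (insF n σ g) = dascQ σ - 1 by omega, hst.2.2,
      show 2*(n+1) - 2*(lapQ σ + 1) - (dascQ σ - 1) - dpQ σ
        = 2*n - 2*lapQ σ - dascQ σ - dpQ σ + 1 by omega]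
  have vR : ∑ g ∈ s2.filter Rc, W g = (s.filter Rc).card •
      ((X 0 * X 1 : MvPolynomial (Fin 5) ℚ) ^ lapQ σ * X 4 ^ (dascQ σ + 1) * X 3 ^ dpQ σ
        * X 2 ^ (2*n - 2*lapQ σ - dascQ σ - dpQ σ + 1)) := by
    rw [eR, Finset.sum_congr rfl (fun g hg => ?_), Finset.sum_const]
    simp only [Finset.mem_filter, hs, Finset.mem_range, hRc] at hg
    obtain ⟨hb, hc⟩ := hg
    have hst := class_R hmem hn (by omega) hc
    rw [hW]
    simp only [wgt]
    rw [hst.1, hst.2.1, hst.2.2,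
      show 2*(n+1) - 2*lapQ σ - (dascQ σ + 1) - dpQ σ
        = 2*n - 2*lapQ σ - dascQ σ - dpQ σ + 1 by omega]
  have vS : ∑ g ∈ s3.filter Sc, W g = (s.filter Sc).card •
      ((X 0 * X 1 : MvPolynomial (Fin 5) ℚ) ^ (lapQ σ + 1) * X 4 ^ dascQ σ * X 3 ^ (dpQ σ - 1)
        * X 2 ^ (2*n - 2*lapQ σ - dascQ σ - dpQ σ + 1)) := by
    rw [eS, Finset.sum_congr rfl (fun g hg => ?_), Finset.sum_const]
    simp only [Finset.mem_filter, hs, Finset.mem_range, hSc] at hg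
    obtain ⟨hb, hc⟩ := hg
    have hst := class_S hmem hn (by omega) hc
    rw [hW]
    simp only [wgt]
    rw [hst.1, hst.2.1, show dpQ (insF n σ g) = dpQ σ - 1 by omega,
      show 2*(n+1) - 2*(lapQ σ + 1) - dascQ σ - (dpQ σ - 1)
        = 2*n - 2*lapQ σ - dascQ σ - dpQ σ + 1 by omega]
  have vT : ∑ g ∈ s4, W g = s4.card •
      ((X 0 * X 1 : MvPolynomial (Fin 5) ℚ) ^ (lapQ σ + 1) * X 4 ^ dascQ σ * X 3 ^ dpQ σ
        * X 2 ^ (2*n - 2*lapQ σ - dascQ σ - dpQ σ)) := by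
    rw [Finset.sum_congr rfl (fun g hg => ?_), Finset.sum_const]
    rw [hs4, hs3, hs2, hs1] at hg
    simp only [Finset.mem_filter, hs, Finset.mem_range, hPc, hQc, hRc, hSc] at hg
    obtain ⟨⟨⟨⟨hb, hnP⟩, hnQ⟩, hnR⟩, hnS⟩ := hg
    have hst := class_T hmem hn (by omega) hnP hnQ hnR hnS
    rw [hW]
    simp only [wgt]
    rw [hst.1, hst.2.1, hst.2.2,
      show 2*(n+1) - 2*(lapQ σ + 1) - dascQ σ - dpQ σ
        = 2*n - 2*lapQ σ - dascQ σ - dpQ σ by omega]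
  have hs4card : s4.card = 2*n - 2*lapQ σ - dascQ σ - dpQ σ + 1 := by omega
  calc ∑ g ∈ s, W g
      = ∑ g ∈ s.filter Pc, W g + (∑ g ∈ s1.filter Qc, W g + (∑ g ∈ s2.filter Rc, W g
        + (∑ g ∈ s3.filter Sc, W g + ∑ g ∈ s4, W g))) := by rw [d0, d1, d2, d3]
    _ = _ := by
        rw [vP, vQ, vR, vS, vT, cP, cQ, cR, cS, hs4card]
        ring
end SPsum
section SPfinal

open Finset MvPolynomial

lemma sum_stirling_succ {n : ℕ} :
    ∑ τ ∈ StirlingSet (n+1), wgt (n+1) τ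
      = ∑ σ ∈ StirlingSet n, ∑ g ∈ Finset.range (2*n+1), wgt (n+1) (insF n σ g) := by
  rw [← Finset.sum_product']
  symm
  apply Finset.sum_bij (fun (p : (Fin (2*n) → Fin (n+1)) × ℕ) _ => insF n p.1 p.2)
  · rintro ⟨σ, g⟩ hp
    simp only [Finset.mem_product, Finset.mem_range] at hp
    exact insF_mem hp.1 (by omega)
  · rintro ⟨σ, g⟩ hp ⟨σ', g'⟩ hp' h
    simp only [Finset.mem_product, Finset.mem_range] at hp hp'
    obtain ⟨h1, h2⟩ := insF_inj (by omega : g ≤ 2*n) (by omega : g' ≤ 2*n) h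
    exact Prod.ext h1 h2
  · intro τ hτ
    obtain ⟨σ, g, hσ, hg, he⟩ := insF_surj hτ
    exact ⟨(σ, g), by simp [Finset.mem_product, hσ]; omega, he⟩
  · rintro ⟨σ, g⟩ hp
    rfl

lemma pow_mul_der (D : Derivation ℚ (MvPolynomial (Fin 5) ℚ) (MvPolynomial (Fin 5) ℚ))
    (t s : MvPolynomial (Fin 5) ℚ) (h : D t = t * s) (k : ℕ) :
    D (t ^ k) = k • (t ^ k * s) := by
  cases k with
  | zero => simp
  | succ m =>
    rw [Derivation.leibniz_pow, h, Nat.succ_sub_one]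
    simp only [smul_eq_mul]
    congr 1
    ring

lemma Dstep (D : Derivation ℚ (MvPolynomial (Fin 5) ℚ) (MvPolynomial (Fin 5) ℚ))
    (hx : D (X 0) = X 0 * X 2 * X 4)
    (hy : D (X 1) = X 1 * X 2 * X 3)
    (hz : D (X 2) = X 0 * X 1 * X 2)
    (hp : D (X 3) = X 0 * X 1 * X 2)
    (hq : D (X 4) = X 0 * X 1 * X 2) (a b c E : ℕ) :
    D (X 2 * ((X 0 * X 1) ^ a * X 4 ^ b * X 3 ^ c * X 2 ^ E))
      = X 2 * ( a • ((X 0 * X 1) ^ a * X 4 ^ b * X 3 ^ (c+1) * X 2 ^ (E+1))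
        + b • ((X 0 * X 1) ^ (a+1) * X 4 ^ (b-1) * X 3 ^ c * X 2 ^ (E+1))
        + a • ((X 0 * X 1) ^ a * X 4 ^ (b+1) * X 3 ^ c * X 2 ^ (E+1))
        + c • ((X 0 * X 1) ^ (a+1) * X 4 ^ b * X 3 ^ (c-1) * X 2 ^ (E+1))
        + (E+1) • ((X 0 * X 1) ^ (a+1) * X 4 ^ b * X 3 ^ c * X 2 ^ E)) := by
  have hu : D (X 0 * X 1) = (X 0 * X 1) * (X 2 * X 3 + X 2 * X 4) := by
    rw [Derivation.leibniz, hx, hy]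
    simp only [smul_eq_mul]
    ring
  have hzz : D (X 2) = X 2 * (X 0 * X 1) := by rw [hz]; ring
  rw [Derivation.leibniz, Derivation.leibniz, Derivation.leibniz, Derivation.leibniz,
    pow_mul_der D _ _ hu a, pow_mul_der D _ _ hzz E,
    Derivation.leibniz_pow D (X 4) b, Derivation.leibniz_pow D (X 3) c, hp, hq, hz]
  simp only [smul_eq_mul, nsmul_eq_mul]
  push_cast
  ring
end SPfinal
theorem statement_10
    (D : Derivation ℚ (MvPolynomial (Fin 5) ℚ) (MvPolynomial (Fin 5) ℚ))
    (hx : D (X 0) = X 0 * X 2 * X 4)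
    (hy : D (X 1) = X 1 * X 2 * X 3)
    (hz : D (X 2) = X 0 * X 1 * X 2)
    (hp : D (X 3) = X 0 * X 1 * X 2)
    (hq : D (X 4) = X 0 * X 1 * X 2) (n : ℕ) :
    (D.toLinearMap ^ n) (X 2) =
      X 2 * ∑ σ ∈ StirlingSet n,
        (X 0 * X 1) ^ lapQ σ * X 4 ^ dascQ σ * X 3 ^ dpQ σ *
          X 2 ^ (2 * n - 2 * lapQ σ - dascQ σ - dpQ σ) := by
  have key : ∀ m, (D.toLinearMap ^ m) (X 2) = X 2 * ∑ σ ∈ StirlingSet m, wgt m σ := by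
    intro m
    induction m with
    | zero =>
      rw [pow_zero, Module.End.one_apply]
      have h0 : StirlingSet 0 = {fun i : Fin (2*0) => i.elim0} := by decide
      rw [h0, Finset.sum_singleton]
      have hl0 : lapQ (fun i : Fin (2*0) => i.elim0) = 0 := by decide
      have hd0 : dascQ (fun i : Fin (2*0) => i.elim0) = 0 := by decide
      have hdp0 : dpQ (fun i : Fin (2*0) => i.elim0) = 0 := by decide
      have h1 : wgt 0 (fun i : Fin (2*0) => i.elim0) = 1 := by
        rw [wgt, hl0, hd0, hdp0]
        norm_num
      rw [h1, mul_one]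
    | succ m ih =>
      rcases Nat.eq_zero_or_pos m with rfl | hm
      · -- m + 1 = 1
        rw [pow_one]
        have h0 : StirlingSet 1 = {fun _ : Fin (2*1) => (1 : Fin (1+1))} := by decide
        rw [h0, Finset.sum_singleton]
        have hl : lapQ (fun _ : Fin (2*1) => (1 : Fin (1+1))) = 1 := by decide
        have hd : dascQ (fun _ : Fin (2*1) => (1 : Fin (1+1))) = 0 := by decide
        have hdp : dpQ (fun _ : Fin (2*1) => (1 : Fin (1+1))) = 0 := by decide
        have : (D.toLinearMap) (X 2) = D (X 2) := rfl
        rw [this, hz, wgt, hl, hd, hdp]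
        norm_num
        ring
      · have hstep : (D.toLinearMap ^ (m+1)) (X 2) = D ((D.toLinearMap ^ m) (X 2)) := by
          rw [pow_succ', Module.End.mul_apply]; rfl
        rw [hstep, ih, Finset.mul_sum, map_sum]
        have hterm : ∀ σ ∈ StirlingSet m, D (X 2 * wgt m σ)
            = X 2 * ∑ g ∈ Finset.range (2*m+1), wgt (m+1) (insF m σ g) := by
          intro σ hσ
          rw [sum_gaps hσ hm]
          have := Dstep D hx hy hz hp hq (lapQ σ) (dascQ σ) (dpQ σ)
            (2*m - 2*lapQ σ - dascQ σ - dpQ σ)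
          rw [wgt]
          rw [this]
        rw [Finset.sum_congr rfl hterm, ← Finset.mul_sum, ← sum_stirling_succ]
  exact key n
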